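/- arXiv:2305.10664 — 3 statements merged into one kernel-verified Lean document; each statement's English description precedes it below -/
import Mathlib

section
/- Let n, L be positive integers, α ∈ (0,2), σ > 0, ν > 0, let q_1,…,q_L be nonnegative reals, let τ_1,…,τ_L be vectors in ℝ^n with entries in {−1,+1}, and let μ be a probability measure on [0,∞) whose Laplace transform satisfies ∫_0^∞ exp(−λ t) dμ(t) = exp(−λ^{α/2}) for all λ ≥ 0. For s = (s_1,…,s_L) ∈ (0,∞)^L define the n×n matrix Q(s) = σ²·I + ν Σ_{ℓ=1}^L s_ℓ q_ℓ^{2/α} τ_ℓ τ_ℓᵀ. Then for every t ∈ ℝ^n, ∫_{(0,∞)^L} exp(−(1/2) tᵀQ(s)t) dμ^{⊗L}(s) = exp(−(1/2)σ²‖t‖² − (ν/2)^{α/2} Σ_{ℓ=1}^L q_ℓ |⟨t, τ_ℓ⟩|^α), where μ^{⊗L} is the L-fold product of μ. -/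
open Matrix MeasureTheory Real

lemma sum_mulVec_aux {L n : ℕ} (A : Fin L → Matrix (Fin n) (Fin n) ℝ) (t : Fin n → ℝ) :
    (∑ ℓ, A ℓ) *ᵥ t = ∑ ℓ, A ℓ *ᵥ t := by
  funext i
  simp only [mulVec, dotProduct, Matrix.sum_apply, Finset.sum_apply, Finset.sum_mul]
  exact Finset.sum_comm


/-- The Laplace functional of the random covariance matrix `Q(s)`: for every `t ∈ ℝⁿ`,
`∫_{(0,∞)^L} exp(−(1/2) tᵀQ(s)t) dμ^{⊗L}(s)
  = exp(−(1/2)σ²‖t‖² − (ν/2)^{α/2} ∑ₗ qₗ |⟨t,τₗ⟩|^α)`. -/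
theorem stable_mixture_charfun_integral (n L : ℕ) (hn : 0 < n) (hL : 0 < L)
    (α σ ν : ℝ) (hα₀ : 0 < α) (hα₂ : α < 2) (hσ : 0 < σ) (hν : 0 < ν)
    (q : Fin L → ℝ) (hq : ∀ ℓ, 0 ≤ q ℓ)
    (τ : Fin L → Fin n → ℝ) (hτ : ∀ ℓ j, τ ℓ j = 1 ∨ τ ℓ j = -1)
    (μ : Measure ℝ) [IsProbabilityMeasure μ] (hsupp : μ (Set.Iio 0) = 0)
    (hLap : ∀ l : ℝ, 0 ≤ l → ∫ t, Real.exp (-l * t) ∂μ = Real.exp (-l ^ (α / 2)))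
    (Q : (Fin L → ℝ) → Matrix (Fin n) (Fin n) ℝ)
    (hQ : ∀ s, Q s = σ ^ 2 • (1 : Matrix (Fin n) (Fin n) ℝ) +
      ν • ∑ ℓ : Fin L, (s ℓ * q ℓ ^ ((2 : ℝ) / α)) •
        Matrix.of (fun i j : Fin n => τ ℓ i * τ ℓ j))
    (t : Fin n → ℝ) :
    (∫ s in {s : Fin L → ℝ | ∀ ℓ, 0 < s ℓ},
        Real.exp (-(1 / 2) * (t ⬝ᵥ Q s *ᵥ t)) ∂(Measure.pi fun _ : Fin L => μ)) =
      Real.exp (-(1 / 2) * σ ^ 2 * ∑ j, t j ^ 2 -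
        (ν / 2) ^ (α / 2) * ∑ ℓ, q ℓ * |∑ j, t j * τ ℓ j| ^ α) := by
  have hα : (0:ℝ) < α / 2 := by linarith
  -- integrability of the exponential transforms
  have hInt : ∀ l : ℝ, 0 ≤ l → Integrable (fun x => Real.exp (-l * x)) μ := by
    intro l hl
    by_contra h
    have h0 := integral_undef h
    rw [hLap l hl] at h0
    exact (Real.exp_pos _).ne' h0
  -- μ has no atom at 0
  have hμ0 : μ {(0:ℝ)} = 0 := by
    have hb : ∀ l : ℝ, 0 ≤ l → (μ {(0:ℝ)}).toReal ≤ Real.exp (-l ^ (α / 2)) := by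
      intro l hl
      have h1 : ∫ x in {(0:ℝ)}, Real.exp (-l * x) ∂μ = (μ {(0:ℝ)}).toReal := by
        rw [setIntegral_congr_fun (measurableSet_singleton 0)
          (g := fun _ => (1:ℝ)) (by intro x hx; simp [Set.mem_singleton_iff.mp hx])]
        simp
      calc (μ {(0:ℝ)}).toReal = ∫ x in {(0:ℝ)}, Real.exp (-l * x) ∂μ := h1.symm
        _ ≤ ∫ x, Real.exp (-l * x) ∂μ :=
          setIntegral_le_integral (hInt l hl)
            (Filter.Eventually.of_forall fun x => (Real.exp_pos _).le)
        _ = Real.exp (-l ^ (α / 2)) := hLap l hl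
    have htend : Filter.Tendsto (fun l : ℝ => Real.exp (-l ^ (α / 2))) Filter.atTop (nhds 0) := by
      apply Real.tendsto_exp_atBot.comp
      apply Filter.tendsto_neg_atBot_iff.mpr
      exact tendsto_rpow_atTop hα
    have hle : (μ {(0:ℝ)}).toReal ≤ 0 :=
      ge_of_tendsto htend (Filter.eventually_atTop.mpr ⟨0, fun l hl => hb l hl⟩)
    have h0 : (μ {(0:ℝ)}).toReal = 0 := le_antisymm hle ENNReal.toReal_nonneg
    exact ((ENNReal.toReal_eq_zero_iff _).mp h0).resolve_right (measure_ne_top μ _)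
  have hpos : ∀ᵐ x ∂μ, 0 < x := by
    rw [ae_iff]
    have hset : {x : ℝ | ¬ 0 < x} = Set.Iio 0 ∪ {0} := by
      ext x
      simp only [Set.mem_setOf_eq, not_lt, Set.mem_union, Set.mem_Iio, Set.mem_singleton_iff]
      constructor
      · intro h
        rcases h.lt_or_eq with h | h
        · exact Or.inl h
        · exact Or.inr h
      · rintro (h | h) <;> simp [h, le_of_lt]
    rw [hset]
    exact le_antisymm (le_trans (measure_union_le _ _) (by rw [hsupp, hμ0]; simp)) zero_le
  -- the positivity set has full measure
  have hfull : ∀ᵐ s ∂(Measure.pi fun _ : Fin L => μ), s ∈ {s : Fin L → ℝ | ∀ ℓ, 0 < s ℓ} := by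
    simp only [Set.mem_setOf_eq]
    rw [MeasureTheory.ae_all_iff]
    intro ℓ
    exact (Measure.tendsto_eval_ae_ae).eventually hpos
  rw [Measure.restrict_eq_self_of_ae_mem hfull]
  -- abbreviations
  set d : Fin L → ℝ := fun ℓ => ∑ j, t j * τ ℓ j with hd
  set a : Fin L → ℝ := fun ℓ => ν / 2 * (q ℓ ^ ((2:ℝ) / α) * d ℓ ^ 2) with ha
  have ha0 : ∀ ℓ, 0 ≤ a ℓ := by
    intro ℓ
    apply mul_nonneg (by positivity)
    exact mul_nonneg (Real.rpow_nonneg (hq ℓ) _) (sq_nonneg _)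
  -- quadratic form computation
  have key : ∀ s : Fin L → ℝ, t ⬝ᵥ Q s *ᵥ t =
      σ ^ 2 * ∑ j, t j ^ 2 + ∑ ℓ, ν * (s ℓ * q ℓ ^ ((2:ℝ) / α)) * d ℓ ^ 2 := by
    intro s
    rw [hQ]
    rw [add_mulVec, dotProduct_add]
    congr 1
    · rw [smul_mulVec, one_mulVec, dotProduct_smul]
      simp [dotProduct, sq]
    · have hds : ∀ v : Fin L → (Fin n → ℝ), t ⬝ᵥ (∑ ℓ, v ℓ) = ∑ ℓ, t ⬝ᵥ v ℓ := by
        intro v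
        simp only [dotProduct, Finset.sum_apply, Finset.mul_sum]
        exact Finset.sum_comm
      rw [smul_mulVec, dotProduct_smul, smul_eq_mul,
        sum_mulVec_aux (fun ℓ => (s ℓ * q ℓ ^ ((2:ℝ) / α)) •
          Matrix.of (fun i j : Fin n => τ ℓ i * τ ℓ j)) t,
        hds, Finset.mul_sum]
      apply Finset.sum_congr rfl
      intro ℓ _
      rw [smul_mulVec, dotProduct_smul, smul_eq_mul]
      have hmv : (Matrix.of (fun i j : Fin n => τ ℓ i * τ ℓ j)) *ᵥ t =
          fun i => τ ℓ i * d ℓ := by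
        funext i
        simp only [mulVec, dotProduct, Matrix.of_apply, hd]
        rw [Finset.mul_sum]
        apply Finset.sum_congr rfl
        intro j _
        ring
      rw [hmv]
      have hdot : (t ⬝ᵥ fun i => τ ℓ i * d ℓ) = d ℓ * d ℓ := by
        simp only [dotProduct, hd]
        rw [Finset.sum_mul]
        exact Finset.sum_congr rfl fun i _ => by ring
      rw [hdot]
      ring
  -- rewrite the integrand as a product
  have hintegrand : ∀ s : Fin L → ℝ,
      Real.exp (-(1 / 2) * (t ⬝ᵥ Q s *ᵥ t)) =
      Real.exp (-(1 / 2) * σ ^ 2 * ∑ j, t j ^ 2) *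
        ∏ ℓ, Real.exp (-(a ℓ) * s ℓ) := by
    intro s
    rw [key s, ← Real.exp_sum, ← Real.exp_add]
    congr 1
    rw [mul_add]
    congr 1
    · ring
    · rw [Finset.mul_sum]
      exact Finset.sum_congr rfl fun ℓ _ => by simp only [ha]; ring
  simp only [hintegrand]
  rw [MeasureTheory.integral_const_mul]
  -- product integral
  letI : MeasureSpace ℝ := ⟨μ⟩
  have hprod : (∫ s : Fin L → ℝ, ∏ ℓ, Real.exp (-(a ℓ) * s ℓ) ∂(Measure.pi fun _ : Fin L => μ)) =
      ∏ ℓ, ∫ x, Real.exp (-(a ℓ) * x) ∂μ :=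
    MeasureTheory.integral_fintype_prod_eq_prod
      (fun ℓ x => Real.exp (-(a ℓ) * x))
  rw [hprod]
  have hLapval : ∀ ℓ, (∫ x, Real.exp (-(a ℓ) * x) ∂μ) = Real.exp (-(a ℓ) ^ (α / 2)) :=
    fun ℓ => hLap (a ℓ) (ha0 ℓ)
  simp only [hLapval]
  rw [← Real.exp_sum, ← Real.exp_add]
  congr 1
  rw [sub_eq_add_neg]
  congr 1
  rw [Finset.mul_sum, ← Finset.sum_neg_distrib]
  apply Finset.sum_congr rfl
  intro ℓ _
  rw [neg_inj]
  -- a ℓ ^ (α/2) = (ν/2)^(α/2) * (q ℓ * |d ℓ| ^ α)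
  have h2 : d ℓ ^ 2 = |d ℓ| ^ (((2:ℕ)):ℝ) := by
    rw [Real.rpow_natCast, sq_abs]
  have haℓ : a ℓ = ν / 2 * (q ℓ ^ ((2:ℝ) / α) * |d ℓ| ^ (((2:ℕ)):ℝ)) := by
    rw [ha]; simp only [← h2]
  rw [haℓ,
    Real.mul_rpow (by positivity)
      (mul_nonneg (Real.rpow_nonneg (hq ℓ) _) (Real.rpow_nonneg (abs_nonneg _) _)),
    Real.mul_rpow (Real.rpow_nonneg (hq ℓ) _) (Real.rpow_nonneg (abs_nonneg _) _),
    ← Real.rpow_mul (hq ℓ), ← Real.rpow_mul (abs_nonneg _)]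
  have he1 : (2:ℝ) / α * (α / 2) = 1 := by field_simp
  have he2 : (((2:ℕ)):ℝ) * (α / 2) = α := by push_cast; ring
  rw [he1, he2, Real.rpow_one]
end

section
/- Let n be a positive integer, α ∈ (0,2], ν > 0, and t ∈ ℝ^n. For each positive integer p, let G^{(p)}_1,…,G^{(p)}_p be independent, identically distributed random vectors in ℝ^n with coordinates bounded in absolute value by 1 and with common law equal to that of a fixed random vector G, and let w^{(p)}_1,…,w^{(p)}_p be independent, identically distributed real random variables, with (w^{(p)}_1,…,w^{(p)}_p, G^{(p)}_1,…,G^{(p)}_p) jointly independent, such that E[exp(i u w^{(p)}_1)] = exp(−((ν/2)^{α/2}/p)·|u|^α) for all u ∈ ℝ. Then lim_{p→∞} E[ exp( i ⟨t, Σ_{j=1}^p w^{(p)}_j G^{(p)}_j⟩ ) ] = exp( −(ν/2)^{α/2} · E[ |⟨t, G⟩|^α ] ). -/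
open MeasureTheory ProbabilityTheory Filter

lemma aux_indep_integral_mul {Ωp β β' : Type*} [MeasurableSpace Ωp] {μ : Measure Ωp}
    [IsProbabilityMeasure μ] [MeasurableSpace β] [MeasurableSpace β']
    {f : Ωp → β} {g : Ωp → β'} (hfg : IndepFun f g μ)
    (hf : Measurable f) (hg : Measurable g)
    (φ : β → ℂ) (ψ : β' → ℂ) (hφ : Measurable φ) (hψ : Measurable ψ) :
    ∫ ω, φ (f ω) * ψ (g ω) ∂μ = (∫ ω, φ (f ω) ∂μ) * ∫ ω, ψ (g ω) ∂μ := by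
  have hmap := (indepFun_iff_map_prod_eq_prod_map_map hf.aemeasurable hg.aemeasurable).mp hfg
  haveI : IsProbabilityMeasure (μ.map f) := Measure.isProbabilityMeasure_map hf.aemeasurable
  haveI : IsProbabilityMeasure (μ.map g) := Measure.isProbabilityMeasure_map hg.aemeasurable
  have h1 : ∫ ω, φ (f ω) * ψ (g ω) ∂μ
      = ∫ z : β × β', φ z.1 * ψ z.2 ∂(μ.map (fun ω => (f ω, g ω))) := by
    exact (integral_map (hf.prodMk hg).aemeasurable
      ((hφ.comp measurable_fst).mul (hψ.comp measurable_snd)).aestronglyMeasurable).symm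
  rw [h1, hmap, integral_prod_mul, integral_map hf.aemeasurable hφ.aestronglyMeasurable,
    integral_map hg.aemeasurable hψ.aestronglyMeasurable]

lemma aux_indep_integral_prod {Ωp : Type*} [MeasurableSpace Ωp] {μ : Measure Ωp}
    [IsProbabilityMeasure μ] {p n : ℕ}
    (wf : Fin p → Ωp → ℝ) (Gf : Fin p → Ωp → Fin n → ℝ)
    (hw : ∀ j, Measurable (wf j)) (hG : ∀ j, Measurable (Gf j))
    (hind : iIndepFun
      (β := fun i : Fin p ⊕ Fin p => Sum.elim (fun _ => ℝ) (fun _ => Fin n → ℝ) i)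
      (m := fun i => i.casesOn (fun _ => (inferInstance : MeasurableSpace ℝ))
        (fun _ => (inferInstance : MeasurableSpace (Fin n → ℝ))))
      (fun i => i.casesOn wf Gf) μ)
    (φ : ℝ × (Fin n → ℝ) → ℂ) (hφ : Measurable φ) (s : Finset (Fin p)) :
    ∫ ω, ∏ j ∈ s, φ (wf j ω, Gf j ω) ∂μ = ∏ j ∈ s, ∫ ω, φ (wf j ω, Gf j ω) ∂μ := by
  classical
  letI mβ : ∀ i : Fin p ⊕ Fin p,
      MeasurableSpace (Sum.elim (fun _ => ℝ) (fun _ => Fin n → ℝ) i) :=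
    fun i => i.casesOn (fun _ => (inferInstance : MeasurableSpace ℝ))
      (fun _ => (inferInstance : MeasurableSpace (Fin n → ℝ)))
  set F : ∀ i : Fin p ⊕ Fin p, Ωp → Sum.elim (fun _ => ℝ) (fun _ => Fin n → ℝ) i :=
    fun i => i.casesOn wf Gf with hF
  have hFmeas : ∀ i, Measurable (F i) := by rintro (j | j); exacts [hw j, hG j]
  have hproj : ∀ (U : Finset (Fin p ⊕ Fin p)) (j : Fin p) (h1 : Sum.inl j ∈ U)
      (h2 : Sum.inr j ∈ U), Measurable (fun x : ∀ k : U,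
        Sum.elim (fun _ => ℝ) (fun _ => Fin n → ℝ) (k : Fin p ⊕ Fin p) =>
        φ ((x ⟨Sum.inl j, h1⟩ : ℝ), (x ⟨Sum.inr j, h2⟩ : Fin n → ℝ))) := by
    intro U j h1 h2
    have hm1 : Measurable (fun x : ∀ k : U,
        Sum.elim (fun _ => ℝ) (fun _ => Fin n → ℝ) (k : Fin p ⊕ Fin p) =>
        (x ⟨Sum.inl j, h1⟩ : ℝ)) := measurable_pi_apply _
    have hm2 : Measurable (fun x : ∀ k : U,
        Sum.elim (fun _ => ℝ) (fun _ => Fin n → ℝ) (k : Fin p ⊕ Fin p) =>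
        (x ⟨Sum.inr j, h2⟩ : Fin n → ℝ)) := measurable_pi_apply _
    exact hφ.comp (hm1.prodMk hm2)
  induction s using Finset.induction_on with
  | empty => simp
  | @insert i s hi ih =>
    simp only [Finset.prod_insert hi]
    set S : Finset (Fin p ⊕ Fin p) := {Sum.inl i, Sum.inr i} with hS
    set T : Finset (Fin p ⊕ Fin p) := s.image Sum.inl ∪ s.image Sum.inr with hT
    have hST : Disjoint S T := by
      rw [Finset.disjoint_left]
      rintro (j | j) hk hkT <;>
      · simp only [hS, hT, Finset.mem_insert, Finset.mem_singleton, Finset.mem_union,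
          Finset.mem_image, Sum.inl.injEq, Sum.inr.injEq, reduceCtorEq, false_or, or_false,
          exists_eq_right, exists_false, or_false, false_or] at hk hkT
        simp_all
    have hmemS1 : Sum.inl i ∈ S := by simp [hS]
    have hmemS2 : Sum.inr i ∈ S := by simp [hS]
    have hmemT1 : ∀ j ∈ s, Sum.inl j ∈ T := fun j hj => by
      simp [hT, Finset.mem_image_of_mem _ hj]
    have hmemT2 : ∀ j ∈ s, Sum.inr j ∈ T := fun j hj => by
      simp [hT, Finset.mem_image_of_mem _ hj]
    have hIndep2 := hind.indepFun_finset S T hST hFmeas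
    set Φ : (∀ k : S, Sum.elim (fun _ => ℝ) (fun _ => Fin n → ℝ) (k : Fin p ⊕ Fin p)) → ℂ :=
      fun x => φ ((x ⟨Sum.inl i, hmemS1⟩ : ℝ), (x ⟨Sum.inr i, hmemS2⟩ : Fin n → ℝ)) with hΦ
    set Ψ : (∀ k : T, Sum.elim (fun _ => ℝ) (fun _ => Fin n → ℝ) (k : Fin p ⊕ Fin p)) → ℂ :=
      fun x => ∏ j ∈ s.attach, φ ((x ⟨Sum.inl j.1, hmemT1 j.1 j.2⟩ : ℝ),
        (x ⟨Sum.inr j.1, hmemT2 j.1 j.2⟩ : Fin n → ℝ)) with hΨ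
    have hΦm : Measurable Φ := hproj S i hmemS1 hmemS2
    have hΨm : Measurable Ψ :=
      Finset.measurable_prod _ fun j _ => hproj T j.1 (hmemT1 j.1 j.2) (hmemT2 j.1 j.2)
    have key := aux_indep_integral_mul hIndep2
      (measurable_pi_lambda _ fun k => hFmeas k.1)
      (measurable_pi_lambda _ fun k => hFmeas k.1) Φ Ψ hΦm hΨm
    have e1 : ∀ ω, Φ (fun k : S => F k ω) = φ (wf i ω, Gf i ω) := fun ω => rfl
    have e2 : ∀ ω, Ψ (fun k : T => F k ω) = ∏ j ∈ s, φ (wf j ω, Gf j ω) := fun ω => by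
      rw [hΨ]
      exact Finset.prod_attach s fun j => φ (wf j ω, Gf j ω)
    simp only [e1, e2] at key
    rw [key, ih]

lemma aux_pow_tendsto_exp (b : ℕ → ℝ) (L : ℝ)
    (h1 : Tendsto (fun p : ℕ => (p : ℝ) * (b p - 1)) atTop (nhds L)) :
    Tendsto (fun p : ℕ => b p ^ p) atTop (nhds (Real.exp L)) := by
  have hb1 : Tendsto b atTop (nhds 1) := by
    have h0 : Tendsto (fun p : ℕ => ((p : ℝ) * (b p - 1)) * (p : ℝ)⁻¹) atTop (nhds (L * 0)) :=
      h1.mul tendsto_inv_atTop_nhds_zero_nat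
    have h2 : Tendsto (fun p : ℕ => 1 + ((p : ℝ) * (b p - 1)) * (p : ℝ)⁻¹) atTop (nhds 1) := by
      simpa using tendsto_const_nhds.add h0
    refine h2.congr' ?_
    filter_upwards [eventually_ge_atTop 1] with p hp
    have hp0 : (p : ℝ) ≠ 0 := by positivity
    field_simp
    ring
  have hbpos : ∀ᶠ p in atTop, 0 < b p := hb1.eventually (eventually_gt_nhds zero_lt_one)
  have h2 : Tendsto (fun p : ℕ => (p : ℝ) * Real.log (b p)) atTop (nhds L) := by
    have hlow : Tendsto (fun p : ℕ => ((p : ℝ) * (b p - 1)) / b p) atTop (nhds L) := by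
      have := h1.div hb1 one_ne_zero
      rw [div_one] at this
      exact this
    refine tendsto_of_tendsto_of_tendsto_of_le_of_le' hlow h1 ?_ ?_
    · filter_upwards [hbpos] with p hp
      have hlog : (b p - 1) / b p ≤ Real.log (b p) := by
        have := Real.log_le_sub_one_of_pos (inv_pos.mpr hp)
        rw [Real.log_inv] at this
        have h3 : 1 - (b p)⁻¹ ≤ Real.log (b p) := by linarith
        have h4 : (b p - 1) / b p = 1 - (b p)⁻¹ := by field_simp
        linarith [h4 ▸ h3]
      rw [mul_div_assoc]
      exact mul_le_mul_of_nonneg_left hlog (by positivity)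
    · filter_upwards [hbpos] with p hp
      exact mul_le_mul_of_nonneg_left (Real.log_le_sub_one_of_pos hp) (by positivity)
  have h3 : Tendsto (fun p : ℕ => Real.exp ((p : ℝ) * Real.log (b p))) atTop
      (nhds (Real.exp L)) := (Real.continuous_exp.tendsto _).comp h2
  refine h3.congr' ?_
  filter_upwards [hbpos] with p hp
  rw [Real.exp_nat_mul, Real.exp_log hp]

lemma aux_single_factor {n : ℕ} (α : ℝ) (hα₀ : 0 < α) (t : Fin n → ℝ)
    {Ωp : Type*} [MeasurableSpace Ωp] {μ : Measure Ωp} [IsProbabilityMeasure μ]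
    {Ω₀ : Type*} [MeasurableSpace Ω₀] (P₀ : Measure Ω₀) [IsProbabilityMeasure P₀]
    (G₀ : Ω₀ → Fin n → ℝ) (hG₀meas : Measurable G₀)
    (p : ℕ) (wj : Ωp → ℝ) (Gj : Ωp → Fin n → ℝ)
    (hwm : Measurable wj) (hGm : Measurable Gj)
    (hpair : IndepFun wj Gj μ)
    (hlaw : Measure.map Gj μ = Measure.map G₀ P₀)
    (c : ℝ)
    (hwchar : ∀ u : ℝ, ∫ ω, Complex.exp (Complex.I * (u : ℂ) * (wj ω : ℂ)) ∂μ =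
      ((Real.exp (-(c / (p : ℝ) * |u| ^ α)) : ℝ) : ℂ)) :
    ∫ ω, Complex.exp (Complex.I * ((wj ω * ∑ k, t k * Gj ω k : ℝ) : ℂ)) ∂μ =
      ((∫ ω, Real.exp (-(c / (p : ℝ) * |∑ k, t k * G₀ ω k| ^ α)) ∂P₀ : ℝ) : ℂ) := by
  classical
  set φ : ℝ × (Fin n → ℝ) → ℂ :=
    fun z => Complex.exp (Complex.I * ((z.1 * ∑ k, t k * z.2 k : ℝ) : ℂ)) with hφ
  have hsummeas : Measurable fun g : Fin n → ℝ => ∑ k, t k * g k :=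
    Finset.measurable_sum _ fun k _ => measurable_const.mul (measurable_pi_apply k)
  have hφm : Measurable φ := by
    apply Complex.measurable_exp.comp
    apply Measurable.const_mul
    exact Complex.measurable_ofReal.comp
      (measurable_fst.mul (hsummeas.comp measurable_snd))
  have hnorm1 : ∀ r : ℝ, ‖Complex.exp (Complex.I * (r : ℂ))‖ = 1 := fun r => by
    rw [Complex.norm_exp]
    simp [Complex.mul_re]
  haveI : IsProbabilityMeasure (μ.map wj) := Measure.isProbabilityMeasure_map hwm.aemeasurable
  haveI : IsProbabilityMeasure (μ.map Gj) := Measure.isProbabilityMeasure_map hGm.aemeasurable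
  have hmap := (indepFun_iff_map_prod_eq_prod_map_map hwm.aemeasurable hGm.aemeasurable).mp hpair
  have h1 : ∫ ω, Complex.exp (Complex.I * ((wj ω * ∑ k, t k * Gj ω k : ℝ) : ℂ)) ∂μ
      = ∫ z, φ z ∂((μ.map wj).prod (μ.map Gj)) := by
    rw [← hmap]
    exact (integral_map (hwm.prodMk hGm).aemeasurable hφm.aestronglyMeasurable).symm
  have hint : Integrable φ ((μ.map wj).prod (μ.map Gj)) := by
    refine Integrable.mono' (integrable_const 1) hφm.aestronglyMeasurable ?_
    exact Eventually.of_forall fun z => le_of_eq (hnorm1 _)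
  have h2 : ∫ z, φ z ∂((μ.map wj).prod (μ.map Gj))
      = ∫ g, ∫ u, φ (u, g) ∂(μ.map wj) ∂(μ.map Gj) := integral_prod_symm φ hint
  have h3 : ∀ g : Fin n → ℝ, ∫ u, φ (u, g) ∂(μ.map wj)
      = ((Real.exp (-(c / (p : ℝ) * |∑ k, t k * g k| ^ α)) : ℝ) : ℂ) := by
    intro g
    have hm : Measurable fun u : ℝ => φ (u, g) :=
      hφm.comp (measurable_id.prodMk measurable_const)
    rw [integral_map hwm.aemeasurable hm.aestronglyMeasurable]
    have e : ∀ ω, φ (wj ω, g)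
        = Complex.exp (Complex.I * ((∑ k, t k * g k : ℝ) : ℂ) * ((wj ω : ℝ) : ℂ)) := by
      intro ω
      have e2 : (Complex.I * ((wj ω * ∑ k, t k * g k : ℝ) : ℂ))
          = Complex.I * ((∑ k, t k * g k : ℝ) : ℂ) * ((wj ω : ℝ) : ℂ) := by
        push_cast
        ring
      simp only [hφ]
      rw [e2]
    rw [integral_congr_ae (Eventually.of_forall e)]
    exact hwchar (∑ k, t k * g k)
  have h4m : Measurable fun g : Fin n → ℝ =>
      ((Real.exp (-(c / (p : ℝ) * |∑ k, t k * g k| ^ α)) : ℝ) : ℂ) := by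
    apply Complex.measurable_ofReal.comp
    apply Real.measurable_exp.comp
    apply Measurable.neg
    apply Measurable.const_mul
    exact ((Real.continuous_rpow_const hα₀.le).measurable.comp (continuous_abs.measurable)).comp
      hsummeas
  rw [h1, h2, integral_congr_ae (Eventually.of_forall h3), hlaw,
    integral_map hG₀meas.aemeasurable h4m.aestronglyMeasurable]
  exact integral_ofReal

/-- Proposition 1 (Der and Lee) in characteristic-function form: as the width `p → ∞`,
the characteristic function of the output of a one-hidden-layer network with i.i.d.
symmetric α-stable hidden-to-output weights of scale `(ν/2)^{1/2} p^{−1/α}` and i.i.d.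
bounded hidden features with common law that of `G₀` converges to the symmetric α-stable
characteristic function `exp(−(ν/2)^{α/2} E[|⟨t,G₀⟩|^α])`. -/
theorem network_charfun_tendsto_stable
    (n : ℕ) (hn : 0 < n) (α ν : ℝ) (hα₀ : 0 < α) (hα₂ : α ≤ 2) (hν : 0 < ν)
    (t : Fin n → ℝ)
    (Ω : ℕ → Type*) (mΩ : ∀ p, MeasurableSpace (Ω p))
    (P : ∀ p, Measure (Ω p)) (hP : ∀ p, IsProbabilityMeasure (P p))
    (Ω₀ : Type*) [MeasurableSpace Ω₀] (P₀ : Measure Ω₀) [IsProbabilityMeasure P₀]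
    (G₀ : Ω₀ → Fin n → ℝ) (hG₀meas : Measurable G₀)
    (w : ∀ p : ℕ, Fin p → Ω p → ℝ) (G : ∀ p : ℕ, Fin p → Ω p → Fin n → ℝ)
    (hwmeas : ∀ p j, Measurable (w p j)) (hGmeas : ∀ p j, Measurable (G p j))
    (hGbd : ∀ p j ω k, |G p j ω k| ≤ 1)
    (hGlaw : ∀ p (j : Fin p), Measure.map (G p j) (P p) = Measure.map G₀ P₀)
    (hindep : ∀ p, iIndepFun
      (β := fun i : Fin p ⊕ Fin p => Sum.elim (fun _ => ℝ) (fun _ => Fin n → ℝ) i)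
      (m := fun i => i.casesOn (fun _ => (inferInstance : MeasurableSpace ℝ))
        (fun _ => (inferInstance : MeasurableSpace (Fin n → ℝ))))
      (fun i => i.casesOn (w p) (G p)) (P p))
    (hwchar : ∀ p (j : Fin p) (u : ℝ),
      ∫ ω, Complex.exp (Complex.I * (u : ℂ) * (w p j ω : ℂ)) ∂(P p) =
        ((Real.exp (-((ν / 2) ^ (α / 2) / (p : ℝ) * |u| ^ α)) : ℝ) : ℂ)) :
    Tendsto (fun p : ℕ =>
        ∫ ω, Complex.exp
          (Complex.I * ((∑ k, t k * ∑ j, w p j ω * G p j ω k : ℝ) : ℂ)) ∂(P p))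
      atTop
      (nhds (((Real.exp (-((ν / 2) ^ (α / 2) *
        ∫ ω, |∑ k, t k * G₀ ω k| ^ α ∂P₀)) : ℝ) : ℂ))) := by
  classical
  have hν2 : (0 : ℝ) < ν / 2 := by linarith
  set c : ℝ := (ν / 2) ^ (α / 2) with hc
  have hc0 : 0 < c := Real.rpow_pos_of_pos hν2 _
  set E : ℝ := ∫ ω, |∑ k, t k * G₀ ω k| ^ α ∂P₀ with hE
  set b : ℕ → ℝ :=
    fun p => ∫ ω, Real.exp (-(c / (p : ℝ) * |∑ k, t k * G₀ ω k| ^ α)) ∂P₀ with hb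
  -- measurability facts
  have hsummeas : Measurable fun g : Fin n → ℝ => ∑ k, t k * g k :=
    Finset.measurable_sum _ fun k _ => measurable_const.mul (measurable_pi_apply k)
  have hX₀m : Measurable fun ω => ∑ k, t k * G₀ ω k := hsummeas.comp hG₀meas
  have hXαm : Measurable fun ω => |∑ k, t k * G₀ ω k| ^ α :=
    (((Real.continuous_rpow_const hα₀.le).measurable.comp continuous_abs.measurable).comp hX₀m)
  -- the key identity: the characteristic function at width p is (b p)^p
  have key : ∀ p : ℕ,
      (∫ ω, Complex.exp
        (Complex.I * ((∑ k, t k * ∑ j, w p j ω * G p j ω k : ℝ) : ℂ)) ∂(P p))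
      = ((b p : ℝ) : ℂ) ^ p := by
    intro p
    haveI := hP p
    set φ : ℝ × (Fin n → ℝ) → ℂ :=
      fun z => Complex.exp (Complex.I * ((z.1 * ∑ k, t k * z.2 k : ℝ) : ℂ)) with hφ
    have hφm : Measurable φ := by
      apply Complex.measurable_exp.comp
      apply Measurable.const_mul
      exact Complex.measurable_ofReal.comp
        (measurable_fst.mul (hsummeas.comp measurable_snd))
    have hpt : ∀ ω, Complex.exp
        (Complex.I * ((∑ k, t k * ∑ j, w p j ω * G p j ω k : ℝ) : ℂ))
        = ∏ j, φ (w p j ω, G p j ω) := by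
      intro ω
      have hsum : (∑ k, t k * ∑ j, w p j ω * G p j ω k)
          = ∑ j, (w p j ω * ∑ k, t k * G p j ω k) := by
        simp_rw [Finset.mul_sum]
        rw [Finset.sum_comm]
        exact Finset.sum_congr rfl fun j _ => Finset.sum_congr rfl fun k _ => by ring
      have hcast : ((∑ j, (w p j ω * ∑ k, t k * G p j ω k) : ℝ) : ℂ)
          = ∑ j, ((w p j ω * ∑ k, t k * G p j ω k : ℝ) : ℂ) := by
        push_cast
        rfl
      rw [hsum, hcast, Finset.mul_sum, Complex.exp_sum]
    rw [integral_congr_ae (Eventually.of_forall hpt),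
      aux_indep_integral_prod (w p) (G p) (hwmeas p) (hGmeas p) (hindep p) φ hφm Finset.univ]
    have hfac : ∀ j : Fin p, ∫ ω, φ (w p j ω, G p j ω) ∂(P p) = ((b p : ℝ) : ℂ) := by
      intro j
      have hpair : IndepFun (w p j) (G p j) (P p) :=
        (hindep p).indepFun (i := Sum.inl j) (j := Sum.inr j) (by simp)
      have := aux_single_factor α hα₀ t P₀ G₀ hG₀meas p (w p j) (G p j)
        (hwmeas p j) (hGmeas p j) hpair (hGlaw p j) c (hwchar p j)
      rw [hb]
      exact this
    rw [Finset.prod_congr rfl fun j _ => hfac j, Finset.prod_const, Finset.card_univ,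
      Fintype.card_fin]
  -- a.e. boundedness of ⟨t, G₀⟩
  set M : ℝ := ∑ k, |t k| with hM
  have hM0 : 0 ≤ M := Finset.sum_nonneg fun k _ => abs_nonneg _
  set Mα : ℝ := M ^ α with hMα
  have hMα0 : 0 ≤ Mα := Real.rpow_nonneg hM0 _
  have hXbd : ∀ᵐ ω ∂P₀, |∑ k, t k * G₀ ω k| ≤ M := by
    set K : Set (Fin n → ℝ) := {x | ∀ k, |x k| ≤ 1} with hK
    have hKm : MeasurableSet K := by
      have : K = ⋂ k, {x : Fin n → ℝ | |x k| ≤ 1} := by ext x; simp [hK, Set.mem_iInter]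
      rw [this]
      exact MeasurableSet.iInter fun k =>
        measurableSet_le (measurable_pi_apply k).abs measurable_const
    have hmem : ∀ᵐ ω ∂P₀, G₀ ω ∈ K := by
      have h0 : P₀ (G₀ ⁻¹' Kᶜ) = 0 := by
        have h1 : (Measure.map G₀ P₀) Kᶜ = 0 := by
          rw [← hGlaw 1 ⟨0, one_pos⟩, Measure.map_apply (hGmeas 1 _) hKm.compl]
          have : (G 1 ⟨0, one_pos⟩) ⁻¹' Kᶜ = ∅ :=
            Set.eq_empty_iff_forall_notMem.2 fun ω hω => hω fun k => hGbd 1 _ ω k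
          rw [this, measure_empty]
        rwa [Measure.map_apply hG₀meas hKm.compl] at h1
      rw [ae_iff]
      convert h0 using 2
      rfl
    filter_upwards [hmem] with ω hω
    calc |∑ k, t k * G₀ ω k| ≤ ∑ k, |t k * G₀ ω k| := Finset.abs_sum_le_sum_abs _ _
      _ ≤ ∑ k, |t k| := Finset.sum_le_sum fun k _ => by
          rw [abs_mul]
          exact mul_le_of_le_one_right (abs_nonneg _) (hω k)
  have hXα : ∀ᵐ ω ∂P₀, |∑ k, t k * G₀ ω k| ^ α ≤ Mα := by
    filter_upwards [hXbd] with ω hω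
    exact Real.rpow_le_rpow (abs_nonneg _) hω hα₀.le
  -- integrability
  have hEint : Integrable (fun ω => |∑ k, t k * G₀ ω k| ^ α) P₀ := by
    refine Integrable.mono' (integrable_const Mα) hXαm.aestronglyMeasurable ?_
    filter_upwards [hXα] with ω hω
    rwa [Real.norm_eq_abs, abs_of_nonneg (Real.rpow_nonneg (abs_nonneg _) _)]
  have hbm : ∀ p : ℕ, Measurable fun ω => Real.exp (-(c / (p : ℝ) * |∑ k, t k * G₀ ω k| ^ α)) :=
    fun p => Real.measurable_exp.comp ((hXαm.const_mul _).neg)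
  have harg0 : ∀ (p : ℕ) (ω : Ω₀), 0 ≤ c / (p : ℝ) * |∑ k, t k * G₀ ω k| ^ α := fun p ω =>
    mul_nonneg (div_nonneg hc0.le (Nat.cast_nonneg p)) (Real.rpow_nonneg (abs_nonneg _) _)
  have hbint : ∀ p : ℕ,
      Integrable (fun ω => Real.exp (-(c / (p : ℝ) * |∑ k, t k * G₀ ω k| ^ α))) P₀ := by
    intro p
    refine Integrable.mono' (integrable_const 1) (hbm p).aestronglyMeasurable ?_
    refine Eventually.of_forall fun ω => ?_
    rw [Real.norm_eq_abs, Real.abs_exp]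
    exact Real.exp_le_one_iff.mpr (neg_nonpos.mpr (harg0 p ω))
  -- the quantitative estimate
  have hDbound : ∀ᶠ p : ℕ in atTop,
      |(p : ℝ) * (b p - 1) + c * E| ≤ c ^ 2 * Mα ^ 2 / p := by
    filter_upwards [eventually_ge_atTop 1,
      tendsto_natCast_atTop_atTop.eventually_ge_atTop (c * Mα)] with p hp1 hpc
    have hp0 : (0 : ℝ) < (p : ℝ) := by
      have : (1 : ℝ) ≤ (p : ℝ) := by exact_mod_cast hp1
      linarith
    -- pointwise bound
    have hpw : ∀ᵐ ω ∂P₀,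
        |Real.exp (-(c / (p : ℝ) * |∑ k, t k * G₀ ω k| ^ α)) - 1
          + c / (p : ℝ) * |∑ k, t k * G₀ ω k| ^ α| ≤ (c * Mα / p) ^ 2 := by
      filter_upwards [hXα] with ω hω
      set x : ℝ := c / (p : ℝ) * |∑ k, t k * G₀ ω k| ^ α with hx
      have hx0 : 0 ≤ x := harg0 p ω
      have hxle : x ≤ c * Mα / p := by
        rw [hx]
        calc c / (p : ℝ) * |∑ k, t k * G₀ ω k| ^ α ≤ c / (p : ℝ) * Mα :=
              mul_le_mul_of_nonneg_left hω (by positivity)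
          _ = c * Mα / p := by ring
      have hle1 : c * Mα / p ≤ 1 := by
        rw [div_le_one hp0]
        exact hpc
      have habs : |(-x)| ≤ 1 := by
        rw [abs_neg, abs_of_nonneg hx0]
        exact hxle.trans hle1
      have := Real.abs_exp_sub_one_sub_id_le habs
      calc |Real.exp (-x) - 1 + x| = |Real.exp (-x) - 1 - (-x)| := by ring_nf
        _ ≤ (-x) ^ 2 := this
        _ = x ^ 2 := by ring
        _ ≤ (c * Mα / p) ^ 2 := by
            apply pow_le_pow_left₀ hx0 hxle
    -- integral representation
    have hsplit : b p - 1 + c / (p : ℝ) * E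
        = ∫ ω, (Real.exp (-(c / (p : ℝ) * |∑ k, t k * G₀ ω k| ^ α)) - 1
            + c / (p : ℝ) * |∑ k, t k * G₀ ω k| ^ α) ∂P₀ := by
      have hf1 : Integrable (fun ω =>
          Real.exp (-(c / (p : ℝ) * |∑ k, t k * G₀ ω k| ^ α)) - 1) P₀ :=
        (hbint p).sub (integrable_const 1)
      have hf2 : Integrable (fun ω => c / (p : ℝ) * |∑ k, t k * G₀ ω k| ^ α) P₀ :=
        hEint.const_mul _
      rw [integral_add hf1 hf2, integral_sub (hbint p) (integrable_const 1),
        integral_const, integral_const_mul]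
      simp [hb, hE]
    have hfint : Integrable (fun ω =>
        Real.exp (-(c / (p : ℝ) * |∑ k, t k * G₀ ω k| ^ α)) - 1
          + c / (p : ℝ) * |∑ k, t k * G₀ ω k| ^ α) P₀ :=
      ((hbint p).sub (integrable_const 1)).add (hEint.const_mul _)
    have hDb : |b p - 1 + c / (p : ℝ) * E| ≤ (c * Mα / p) ^ 2 := by
      rw [hsplit]
      have habs := norm_integral_le_integral_norm (μ := P₀) (f := fun ω =>
        Real.exp (-(c / (p : ℝ) * |∑ k, t k * G₀ ω k| ^ α)) - 1
          + c / (p : ℝ) * |∑ k, t k * G₀ ω k| ^ α)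
      simp only [Real.norm_eq_abs] at habs
      calc |∫ ω, (Real.exp (-(c / (p : ℝ) * |∑ k, t k * G₀ ω k| ^ α)) - 1
            + c / (p : ℝ) * |∑ k, t k * G₀ ω k| ^ α) ∂P₀|
          ≤ ∫ ω, |Real.exp (-(c / (p : ℝ) * |∑ k, t k * G₀ ω k| ^ α)) - 1
            + c / (p : ℝ) * |∑ k, t k * G₀ ω k| ^ α| ∂P₀ := habs
        _ ≤ ∫ _ω, (c * Mα / p) ^ 2 ∂P₀ := integral_mono_ae hfint.abs (integrable_const _) hpw
        _ = (c * Mα / p) ^ 2 := by simp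
    have heq : (p : ℝ) * (b p - 1) + c * E = (p : ℝ) * (b p - 1 + c / (p : ℝ) * E) := by
      field_simp
    rw [heq, abs_mul, abs_of_nonneg hp0.le]
    calc (p : ℝ) * |b p - 1 + c / (p : ℝ) * E| ≤ (p : ℝ) * (c * Mα / p) ^ 2 :=
          mul_le_mul_of_nonneg_left hDb hp0.le
      _ = c ^ 2 * Mα ^ 2 / p := by
          field_simp
  -- the limit of p * (b p - 1)
  have h1 : Tendsto (fun p : ℕ => (p : ℝ) * (b p - 1)) atTop (nhds (-(c * E))) := by
    have hz : Tendsto (fun p : ℕ => c ^ 2 * Mα ^ 2 / (p : ℝ)) atTop (nhds 0) :=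
      tendsto_const_div_atTop_nhds_zero_nat _
    refine tendsto_of_tendsto_of_tendsto_of_le_of_le'
      (g := fun p : ℕ => -(c * E) - c ^ 2 * Mα ^ 2 / p)
      (h := fun p : ℕ => -(c * E) + c ^ 2 * Mα ^ 2 / p)
      (by simpa using tendsto_const_nhds.sub hz) (by simpa using tendsto_const_nhds.add hz)
      ?_ ?_ <;> filter_upwards [hDbound] with p hp
    · have := (abs_le.mp hp).1
      linarith
    · have := (abs_le.mp hp).2
      linarith
  have hreal : Tendsto (fun p : ℕ => b p ^ p) atTop (nhds (Real.exp (-(c * E)))) :=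
    aux_pow_tendsto_exp b _ h1
  have hC : Tendsto (fun p : ℕ => ((b p : ℝ) : ℂ) ^ p) atTop
      (nhds ((Real.exp (-(c * E)) : ℝ) : ℂ)) := by
    have h2 := (Complex.continuous_ofReal.tendsto _).comp hreal
    refine h2.congr fun p => ?_
    exact Complex.ofReal_pow _ _
  exact hC.congr fun p => (key p).symm
end

section
/- Let n ≥ 1 and let x_1 < x_2 < ⋯ < x_n be real numbers. Then the set of vectors v ∈ {−1,+1}^n for which there exist real numbers b and w with b + w·x_j ≠ 0 and v_j = sign(b + w·x_j) for every j ∈ {1,…,n} has exactly 2n elements. -/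
/-- "increasing" pattern: -1 below threshold t, +1 above. -/
def Ipat (n t : ℕ) : Fin n → ℝ := fun j => if (j : ℕ) < t then -1 else 1

/-- "decreasing" pattern: +1 below threshold t, -1 above. -/
def Dpat (n t : ℕ) : Fin n → ℝ := fun j => if (j : ℕ) < t then 1 else -1

/-- enumeration of all realizable patterns by `0, 1, ..., 2n-1` (and `2n ↦` junk). -/
def hmap (n : ℕ) : ℕ → (Fin n → ℝ) := fun t => if t ≤ n then Ipat n t else Dpat n (t - n)

lemma mem_iff_lt_card {n : ℕ} {T : Finset (Fin n)}
    (hT : ∀ i j : Fin n, i ≤ j → j ∈ T → i ∈ T) (j : Fin n) :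
    j ∈ T ↔ (j : ℕ) < T.card := by
  constructor
  · intro hj
    have h1 : Finset.Iic j ⊆ T := fun i hi => hT i j (Finset.mem_Iic.mp hi) hj
    have := Finset.card_le_card h1
    rw [Fin.card_Iic] at this
    omega
  · intro h
    by_contra hj
    have h1 : T ⊆ Finset.Iio j := by
      intro i hi
      rw [Finset.mem_Iio]
      by_contra hij
      exact hj (hT j i (le_of_not_gt hij) hi)
    have := Finset.card_le_card h1
    rw [Fin.card_Iio] at this
    omega

lemma Ipat_inj {n t₁ t₂ : ℕ} (h₁ : t₁ ≤ n) (h₂ : t₂ ≤ n) (h : Ipat n t₁ = Ipat n t₂) :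
    t₁ = t₂ := by
  by_contra hne
  rcases Nat.lt_or_ge t₁ t₂ with hlt | hge
  · have hj : t₁ < n := lt_of_lt_of_le hlt h₂
    have := congrFun h ⟨t₁, hj⟩
    simp only [Ipat, if_neg (lt_irrefl t₁), if_pos hlt] at this
    norm_num at this
  · have hlt : t₂ < t₁ := lt_of_le_of_ne hge (Ne.symm hne)
    have hj : t₂ < n := lt_of_lt_of_le hlt h₁
    have := congrFun h ⟨t₂, hj⟩
    simp only [Ipat, if_neg (lt_irrefl t₂), if_pos hlt] at this
    norm_num at this

lemma Ipat_ne_Dpat {n t s : ℕ} (hn : 1 ≤ n) (hs1 : 1 ≤ s) (hs2 : s ≤ n - 1) :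
    Ipat n t ≠ Dpat n s := by
  intro h
  have h0 := congrFun h ⟨0, hn⟩
  have hlast := congrFun h ⟨n - 1, by omega⟩
  simp only [Ipat, Dpat, Fin.val_mk] at h0 hlast
  rw [if_pos (show 0 < s from hs1)] at h0
  rw [if_neg (show ¬ (n - 1 < s) by omega)] at hlast
  by_cases ht : 0 < t
  · rw [if_pos ht] at h0; norm_num at h0
  · rw [if_neg (show ¬ (n - 1 < t) by omega)] at hlast
    norm_num at hlast

lemma Dpat_inj {n s₁ s₂ : ℕ} (h₁ : s₁ ≤ n - 1) (h₂ : s₂ ≤ n - 1) (hn : 1 ≤ n)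
    (h : Dpat n s₁ = Dpat n s₂) : s₁ = s₂ := by
  by_contra hne
  rcases Nat.lt_or_ge s₁ s₂ with hlt | hge
  · have := congrFun h ⟨s₁, by omega⟩
    simp only [Dpat, if_neg (lt_irrefl s₁), if_pos hlt] at this
    norm_num at this
  · have hlt : s₂ < s₁ := lt_of_le_of_ne hge (Ne.symm hne)
    have := congrFun h ⟨s₂, by omega⟩
    simp only [Dpat, if_neg (lt_irrefl s₂), if_pos hlt] at this
    norm_num at this

/-- One-dimensional count of hyperplane partitions: for ordered inputs `x₁ < ⋯ < xₙ`,
there are exactly `2n` realizable sign patterns `vⱼ = sign(b + w·xⱼ)`. -/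
theorem card_realizable_sign_patterns_one_dim (n : ℕ) (hn : 1 ≤ n)
    (x : Fin n → ℝ) (hx : StrictMono x) :
    {v : Fin n → ℝ | (∀ j, v j = 1 ∨ v j = -1) ∧
      ∃ b w : ℝ, ∀ j, b + w * x j ≠ 0 ∧ v j = Real.sign (b + w * x j)}.ncard = 2 * n := by
  set S := {v : Fin n → ℝ | (∀ j, v j = 1 ∨ v j = -1) ∧
      ∃ b w : ℝ, ∀ j, b + w * x j ≠ 0 ∧ v j = Real.sign (b + w * x j)} with hS
  -- `Ipat n t` is realizable for all `t ≤ n`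
  have hIpat : ∀ t : ℕ, t ≤ n → Ipat n t ∈ S := by
    intro t ht
    refine ⟨fun j => by unfold Ipat; split <;> simp, ?_⟩
    by_cases ht0 : t = 0
    · refine ⟨1, 0, fun j => ?_⟩
      constructor
      · norm_num
      · simp [Ipat, ht0, Real.sign_of_pos]
    by_cases htn : t = n
    · refine ⟨-1, 0, fun j => ?_⟩
      constructor
      · norm_num
      · have : (j : ℕ) < t := htn ▸ j.isLt
        simp only [Ipat, if_pos this]
        rw [show (-1 : ℝ) + 0 * x j = -1 by ring, Real.sign_of_neg (by norm_num)]
    · -- 0 < t < n, use w = 1, threshold between x_{t-1} and x_t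
      have ht1 : t - 1 < n := by omega
      have ht2 : t < n := by omega
      set a := x ⟨t - 1, ht1⟩
      set c := x ⟨t, ht2⟩
      have hac : a < c := hx (by simp [Fin.lt_def]; omega)
      refine ⟨-((a + c) / 2), 1, fun j => ?_⟩
      by_cases hj : (j : ℕ) < t
      · have hxj : x j ≤ a := by
          rcases eq_or_lt_of_le (show (j : ℕ) ≤ t - 1 by omega) with he | hl
          · have : j = ⟨t - 1, ht1⟩ := Fin.ext he
            simp [this, a]
          · exact le_of_lt (hx (by simp [Fin.lt_def]; omega))
        have hneg : -((a + c) / 2) + 1 * x j < 0 := by nlinarith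
        constructor
        · exact ne_of_lt hneg
        · simp only [Ipat, if_pos hj]
          rw [Real.sign_of_neg hneg]
      · have hxj : c ≤ x j := by
          rcases eq_or_lt_of_le (show t ≤ (j : ℕ) by omega) with he | hl
          · have : j = ⟨t, ht2⟩ := Fin.ext he.symm
            simp [this, c]
          · exact le_of_lt (hx (by simp [Fin.lt_def]; omega))
        have hpos : 0 < -((a + c) / 2) + 1 * x j := by nlinarith
        constructor
        · exact ne_of_gt hpos
        · simp only [Ipat, if_neg hj]
          rw [Real.sign_of_pos hpos]
  -- `Dpat n s` is realizable for `1 ≤ s ≤ n - 1`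
  have hDpat : ∀ s : ℕ, 1 ≤ s → s ≤ n - 1 → Dpat n s ∈ S := by
    intro s hs1 hs2
    refine ⟨fun j => by unfold Dpat; split <;> simp, ?_⟩
    have hs1' : s - 1 < n := by omega
    have hs2' : s < n := by omega
    set a := x ⟨s - 1, hs1'⟩
    set c := x ⟨s, hs2'⟩
    have hac : a < c := hx (by simp [Fin.lt_def]; omega)
    refine ⟨(a + c) / 2, -1, fun j => ?_⟩
    by_cases hj : (j : ℕ) < s
    · have hxj : x j ≤ a := by
        rcases eq_or_lt_of_le (show (j : ℕ) ≤ s - 1 by omega) with he | hl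
        · have : j = ⟨s - 1, hs1'⟩ := Fin.ext he
          simp [this, a]
        · exact le_of_lt (hx (by simp [Fin.lt_def]; omega))
      have hpos : 0 < (a + c) / 2 + (-1) * x j := by nlinarith
      constructor
      · exact ne_of_gt hpos
      · simp only [Dpat, if_pos hj]
        rw [Real.sign_of_pos hpos]
    · have hxj : c ≤ x j := by
        rcases eq_or_lt_of_le (show s ≤ (j : ℕ) by omega) with he | hl
        · have : j = ⟨s, hs2'⟩ := Fin.ext he.symm
          simp [this, c]
        · exact le_of_lt (hx (by simp [Fin.lt_def]; omega))
      have hneg : (a + c) / 2 + (-1) * x j < 0 := by nlinarith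
      constructor
      · exact ne_of_lt hneg
      · simp only [Dpat, if_neg hj]
        rw [Real.sign_of_neg hneg]
  -- S equals the image of `hmap n` on `range (2n)`
  have hSeq : S = ↑((Finset.range (2 * n)).image (hmap n)) := by
    ext v
    simp only [Finset.coe_image, Finset.coe_range, Set.mem_image, Set.mem_Iio]
    constructor
    · rintro ⟨hv, b, w, hbw⟩
      rcases le_or_gt 0 w with hw | hw
      · -- non-negative slope: increasing pattern
        set T := Finset.univ.filter (fun j => v j = -1) with hT
        have hTd : ∀ i j : Fin n, i ≤ j → j ∈ T → i ∈ T := by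
          intro i j hij hjT
          simp only [hT, Finset.mem_filter, Finset.mem_univ, true_and] at hjT ⊢
          have hje := (hbw j).2
          have hjne := (hbw j).1
          have hneg : b + w * x j < 0 := by
            rcases lt_or_gt_of_ne hjne with h | h
            · exact h
            · rw [Real.sign_of_pos h] at hje
              rw [hje] at hjT; norm_num at hjT
          have hle : b + w * x i ≤ b + w * x j := by
            have : x i ≤ x j := hx.monotone hij
            nlinarith
          have hineg : b + w * x i < 0 := lt_of_le_of_lt hle hneg
          rw [(hbw i).2, Real.sign_of_neg hineg]
        have hvI : v = Ipat n T.card := by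
          funext j
          by_cases hj : (j : ℕ) < T.card
          · have : j ∈ T := (mem_iff_lt_card hTd j).mpr hj
            simp only [hT, Finset.mem_filter, Finset.mem_univ, true_and] at this
            simp [Ipat, if_pos hj, this]
          · have : j ∉ T := fun h => hj ((mem_iff_lt_card hTd j).mp h)
            simp only [hT, Finset.mem_filter, Finset.mem_univ, true_and] at this
            rcases hv j with h | h
            · simp [Ipat, if_neg hj, h]
            · exact absurd h this
        have hcard : T.card ≤ n := by
          have := Finset.card_le_univ T
          simpa using this
        exact ⟨T.card, by omega, by rw [hmap, if_pos hcard, ← hvI]⟩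
      · -- negative slope: decreasing pattern
        set T := Finset.univ.filter (fun j => v j = 1) with hT
        have hTd : ∀ i j : Fin n, i ≤ j → j ∈ T → i ∈ T := by
          intro i j hij hjT
          simp only [hT, Finset.mem_filter, Finset.mem_univ, true_and] at hjT ⊢
          have hje := (hbw j).2
          have hjne := (hbw j).1
          have hpos : 0 < b + w * x j := by
            rcases lt_or_gt_of_ne hjne with h | h
            · rw [Real.sign_of_neg h] at hje
              rw [hje] at hjT; norm_num at hjT
            · exact h
          have hle : b + w * x j ≤ b + w * x i := by
            have : x i ≤ x j := hx.monotone hij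
            nlinarith
          have hipos : 0 < b + w * x i := lt_of_lt_of_le hpos hle
          rw [(hbw i).2, Real.sign_of_pos hipos]
        have hvD : v = Dpat n T.card := by
          funext j
          by_cases hj : (j : ℕ) < T.card
          · have : j ∈ T := (mem_iff_lt_card hTd j).mpr hj
            simp only [hT, Finset.mem_filter, Finset.mem_univ, true_and] at this
            simp [Dpat, if_pos hj, this]
          · have : j ∉ T := fun h => hj ((mem_iff_lt_card hTd j).mp h)
            simp only [hT, Finset.mem_filter, Finset.mem_univ, true_and] at this
            rcases hv j with h | h
            · exact absurd h this
            · simp [Dpat, if_neg hj, h]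
        have hcard : T.card ≤ n := by
          have := Finset.card_le_univ T
          simpa using this
        by_cases ht0 : T.card = 0
        · -- constant -1 pattern = Ipat n n
          refine ⟨n, by omega, ?_⟩
          rw [hmap, if_pos le_rfl]
          rw [hvD, ht0]
          funext j
          simp [Ipat, Dpat, j.isLt]
        by_cases htn : T.card = n
        · -- constant 1 pattern = Ipat n 0
          refine ⟨0, by omega, ?_⟩
          rw [hmap, if_pos (Nat.zero_le n)]
          rw [hvD, htn]
          funext j
          simp [Ipat, Dpat, j.isLt]
        · refine ⟨n + T.card, by omega, ?_⟩
          rw [hmap, if_neg (by omega)]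
          rw [hvD, show n + T.card - n = T.card from by omega]
    · rintro ⟨t, ht, rfl⟩
      by_cases htn : t ≤ n
      · rw [hmap, if_pos htn]; exact hIpat t htn
      · rw [hmap, if_neg htn]; exact hDpat (t - n) (by omega) (by omega)
  rw [hSeq, Set.ncard_coe_finset]
  rw [Finset.card_image_of_injOn, Finset.card_range]
  intro a ha b hb hab
  simp only [Finset.coe_range, Set.mem_Iio] at ha hb
  simp only [hmap] at hab
  by_cases han : a ≤ n <;> by_cases hbn : b ≤ n
  · rw [if_pos han, if_pos hbn] at hab
    exact Ipat_inj han hbn hab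
  · rw [if_pos han, if_neg hbn] at hab
    exact absurd hab (Ipat_ne_Dpat hn (by omega) (by omega))
  · rw [if_neg han, if_pos hbn] at hab
    exact absurd hab.symm (Ipat_ne_Dpat hn (by omega) (by omega))
  · rw [if_neg han, if_neg hbn] at hab
    have := Dpat_inj (show a - n ≤ n - 1 by omega) (show b - n ≤ n - 1 by omega) hn hab
    omega
end
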